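/- Let η ∈ ℝ^d with η₁ = 1, let Γ be d×d symmetric positive semidefinite with zero first row and column and positive definite lower-right (d-1)×(d-1) block, and let Δ = Γ + ηη'. Then the matrix K = Δ^{-1/2} Γ Δ^{-1/2} satisfies K = I_d - ww' where w = Δ^{-1/2}η is a unit vector; in particular K has eigenvalue 0 with eigenvector w and eigenvalue 1 with multiplicity d - 1 on the orthogonal complement of w. -/

import Mathlib

open Matrix

namespace Matrix.PosSemidef

open scoped ComplexOrder

/-- The positive semidefinite square root of a positive semidefinite matrix
(the definition removed from Mathlib, restored with its old meaning). -/
noncomputable def sqrt {n 𝕜 : Type*} [Fintype n] [DecidableEq n] [RCLike 𝕜]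
    {A : Matrix n n 𝕜} (hA : A.PosSemidef) : Matrix n n 𝕜 :=
  hA.1.eigenvectorUnitary.1 * diagonal ((↑) ∘ Real.sqrt ∘ hA.1.eigenvalues) *
    (star hA.1.eigenvectorUnitary : Matrix n n 𝕜)

end Matrix.PosSemidef

lemma aux_mul_vecMulVec {m : Type*} [Fintype m] [DecidableEq m]
    (A : Matrix m m ℝ) (u v : m → ℝ) :
    A * vecMulVec u v = vecMulVec (A *ᵥ u) v := by
  ext i j
  simp [Matrix.mul_apply, vecMulVec_apply, Matrix.mulVec, dotProduct,
    Finset.sum_mul, mul_assoc]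

lemma aux_vecMulVec_mul {m : Type*} [Fintype m] [DecidableEq m]
    (A : Matrix m m ℝ) (u v : m → ℝ) :
    vecMulVec u v * A = vecMulVec u (Aᵀ *ᵥ v) := by
  ext i j
  simp [Matrix.mul_apply, vecMulVec_apply, Matrix.mulVec, dotProduct,
    Finset.mul_sum, mul_comm, mul_left_comm]

lemma aux_vecMulVec_mulVec {m : Type*} [Fintype m]
    (u v x : m → ℝ) : vecMulVec u v *ᵥ x = (v ⬝ᵥ x) • u := by
  ext i
  simp [Matrix.mulVec, vecMulVec_apply, dotProduct, Finset.mul_sum, mul_assoc,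
    mul_comm, mul_left_comm]

theorem stmt13 {n : ℕ} (η : Fin (n + 1) → ℝ) (hη : η 0 = 1)
    (Γ : Matrix (Fin (n + 1)) (Fin (n + 1)) ℝ) (hΓ : Γ.PosSemidef)
    (hrow : ∀ j, Γ 0 j = 0) (hcol : ∀ i, Γ i 0 = 0)
    (hblock : (Γ.submatrix Fin.succ Fin.succ).PosDef)
    (hΔ : (Γ + vecMulVec η η).PosSemidef) :
    let K := (hΔ.sqrt)⁻¹ * Γ * (hΔ.sqrt)⁻¹
    let w := (hΔ.sqrt)⁻¹ *ᵥ η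
    K = 1 - vecMulVec w w ∧ w ⬝ᵥ w = 1 ∧ K *ᵥ w = 0 ∧
      ∀ v : Fin (n + 1) → ℝ, v ⬝ᵥ w = 0 → K *ᵥ v = v := by
  intro K w
  set Δ : Matrix (Fin (n + 1)) (Fin (n + 1)) ℝ := Γ + vecMulVec η η with hΔdef
  set S := hΔ.sqrt with hSdef
  have hSS : S * S = Δ := by
    have hU : (star hΔ.1.eigenvectorUnitary : Matrix (Fin (n + 1)) (Fin (n + 1)) ℝ) *
        hΔ.1.eigenvectorUnitary = 1 := Unitary.coe_star_mul_self _
    have key : ∀ A B : Matrix (Fin (n + 1)) (Fin (n + 1)) ℝ,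
        hΔ.1.eigenvectorUnitary.1 * A * (star hΔ.1.eigenvectorUnitary : Matrix _ _ ℝ) *
          (hΔ.1.eigenvectorUnitary.1 * B * (star hΔ.1.eigenvectorUnitary : Matrix _ _ ℝ)) =
        hΔ.1.eigenvectorUnitary.1 * (A * B) * (star hΔ.1.eigenvectorUnitary : Matrix _ _ ℝ) := by
      intro A B
      simp only [mul_assoc]
      congr 1
      congr 1
      rw [← mul_assoc, hU, one_mul]
    rw [hSdef, Matrix.PosSemidef.sqrt, key, diagonal_mul_diagonal]
    conv_rhs => rw [hΔ.1.spectral_theorem, Unitary.conjStarAlgAut_apply]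
    congr 2
    congr 1
    funext i
    simp [Real.mul_self_sqrt (hΔ.eigenvalues_nonneg i)]
  have hSsym : Sᵀ = S := by
    have : Sᴴ = S := by
      simp only [hSdef, Matrix.PosSemidef.sqrt, conjTranspose_mul, Unitary.coe_star,
        star_eq_conjTranspose, conjTranspose_conjTranspose, diagonal_conjTranspose, mul_assoc,
        star_trivial]
    simpa [conjTranspose_eq_transpose_of_trivial] using this
  -- Δ is positive definite
  have hΔpd : Δ.PosDef := by
    refine posDef_iff_dotProduct_mulVec.mpr ⟨hΔ.1, fun x hx => ?_⟩
    have hquad : star x ⬝ᵥ Δ *ᵥ x = x ⬝ᵥ Γ *ᵥ x + (η ⬝ᵥ x) ^ 2 := by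
      simp [hΔdef, Matrix.add_mulVec, aux_vecMulVec_mulVec, dotProduct_add,
        dotProduct_smul, sq, mul_comm, dotProduct_comm]
    have hΓx : 0 ≤ x ⬝ᵥ Γ *ᵥ x := by simpa using (posSemidef_iff_dotProduct_mulVec.mp hΓ).2 x
    rcases eq_or_ne (x ∘ Fin.succ) 0 with hy | hy
    · -- x is supported on the first coordinate
      have hx0 : x 0 ≠ 0 := by
        intro h0
        apply hx
        funext i
        refine Fin.cases h0 (fun j => ?_) i
        exact congrFun hy j
      have hηx : η ⬝ᵥ x = x 0 := by
        rw [dotProduct, Fin.sum_univ_succ, hη, one_mul]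
        have : ∀ j : Fin n, η j.succ * x j.succ = 0 := by
          intro j
          have := congrFun hy j
          simp only [Function.comp_apply] at this
          simp [this]
        simp [this]
      rw [hquad, hηx]
      have : 0 < x 0 ^ 2 := by positivity
      linarith
    · -- the tail of x is nonzero; use the positive definite block
      have hxΓ : x ⬝ᵥ Γ *ᵥ x = (x ∘ Fin.succ) ⬝ᵥ (Γ.submatrix Fin.succ Fin.succ) *ᵥ (x ∘ Fin.succ) := by
        simp only [dotProduct, Matrix.mulVec, dotProduct, submatrix_apply, Function.comp_apply]
        rw [Fin.sum_univ_succ]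
        simp only [hrow, zero_mul, Finset.sum_const_zero, mul_zero, zero_add]
        congr 1
        funext i
        congr 1
        rw [Fin.sum_univ_succ]
        simp [hcol]
      have hpos : 0 < x ⬝ᵥ Γ *ᵥ x := by
        rw [hxΓ]
        have := (posDef_iff_dotProduct_mulVec.mp hblock).2 (x := x ∘ Fin.succ) hy
        simpa using this
      rw [hquad]
      have : 0 ≤ (η ⬝ᵥ x) ^ 2 := sq_nonneg _
      linarith
  -- S is invertible
  have hdetS : IsUnit S.det := by
    have hdd : S.det * S.det = Δ.det := by rw [← det_mul, hSS]
    have : Δ.det ≠ 0 := ne_of_gt hΔpd.det_pos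
    have hS0 : S.det ≠ 0 := fun h => this (by rw [← hdd, h, mul_zero])
    exact isUnit_iff_ne_zero.mpr hS0
  have hSiS : S⁻¹ * S = 1 := nonsing_inv_mul S hdetS
  have hSSi : S * S⁻¹ = 1 := mul_nonsing_inv S hdetS
  have hSitr : (S⁻¹)ᵀ = S⁻¹ := by rw [transpose_nonsing_inv, hSsym]
  -- Δ *ᵥ e₀ = η
  have hΔe : Δ *ᵥ Pi.single 0 1 = η := by
    rw [hΔdef, Matrix.add_mulVec, aux_vecMulVec_mulVec]
    have h1 : Γ *ᵥ Pi.single (0 : Fin (n + 1)) 1 = 0 := by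
      funext i
      simp [Matrix.mulVec, dotProduct, Pi.single_apply, hcol]
    have h2 : η ⬝ᵥ Pi.single (0 : Fin (n + 1)) 1 = 1 := by
      simp [dotProduct, Pi.single_apply, hη]
    rw [h1, h2, zero_add, one_smul]
  -- w ⬝ w = 1
  have hΔinv : Δ⁻¹ *ᵥ η = Pi.single 0 1 := by
    have hΔinvS : Δ⁻¹ = S⁻¹ * S⁻¹ := by rw [← hSS, Matrix.mul_inv_rev]
    rw [← hΔe, mulVec_mulVec, hΔinvS]
    rw [← hSS]
    have h2 : S⁻¹ * S⁻¹ * (S * S) = 1 := by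
      rw [mul_assoc, ← mul_assoc S⁻¹ S S, hSiS, one_mul, hSiS]
    rw [h2, one_mulVec]
  have hww : w ⬝ᵥ w = 1 := by
    have h1 : w ⬝ᵥ w = η ⬝ᵥ (Δ⁻¹ *ᵥ η) := by
      have hΔinvS : Δ⁻¹ = S⁻¹ * S⁻¹ := by rw [← hSS, Matrix.mul_inv_rev]
      rw [hΔinvS, ← mulVec_mulVec, dotProduct_mulVec η, ← mulVec_transpose, hSitr]
    rw [h1, hΔinv]
    simp [dotProduct, Pi.single_apply, hη]
  -- K = 1 - w wᵀ
  have hK : K = 1 - vecMulVec w w := by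
    show S⁻¹ * Γ * S⁻¹ = _
    have hΓeq : Γ = Δ - vecMulVec η η := by
      rw [hΔdef, add_sub_cancel_right]
    rw [hΓeq, mul_sub, sub_mul, ← hSS]
    have h1 : S⁻¹ * (S * S) * S⁻¹ = 1 := by
      rw [← mul_assoc, hSiS, one_mul, hSSi]
    rw [h1]
    congr 1
    rw [aux_mul_vecMulVec, aux_vecMulVec_mul, hSitr]
  refine ⟨hK, hww, ?_, ?_⟩
  · rw [hK, sub_mulVec, one_mulVec, aux_vecMulVec_mulVec, hww, one_smul, sub_self]
  · intro v hv
    have hwv : w ⬝ᵥ v = 0 := by rwa [dotProduct_comm]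
    rw [hK, sub_mulVec, one_mulVec, aux_vecMulVec_mulVec, hwv, zero_smul, sub_zero]
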